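/- Let p₁, p₂, p₃ ∈ ℝ² be affinely independent, let T be the convex hull of {p₁, p₂, p₃}, and let v : ℝ² → ℝ be an affine map with vᵢ := v(pᵢ). Then ∫_T v(x)² dx ≤ (|T|/3)·(v₁² + v₂² + v₃²), where |T| denotes the two-dimensional Lebesgue measure of T and the integral is with respect to Lebesgue measure on ℝ². -/

import Mathlib

open MeasureTheory

noncomputable section

namespace TriUpperAux

local notation "E2" => EuclideanSpace ℝ (Fin 2)

/-- Two affine maps into `ℝ` that agree on an affine basis are equal. -/
lemma affineMap_ext (b : AffineBasis (Fin 3) ℝ E2) (f g : E2 →ᵃ[ℝ] ℝ)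
    (hfg : ∀ i, f (b i) = g (b i)) : f = g := by
  ext x
  have hw : ∑ i, b.coord i x = 1 := b.sum_coord_apply_eq_one x
  have hx := b.affineCombination_coord_eq_self x
  have h1 : f x = ∑ i, b.coord i x • f (b i) := by
    conv_lhs => rw [← hx]
    rw [Finset.map_affineCombination _ _ _ hw,
      Finset.univ.affineCombination_eq_linear_combination _ _ hw]
    rfl
  have h2 : g x = ∑ i, b.coord i x • g (b i) := by
    conv_lhs => rw [← hx]
    rw [Finset.map_affineCombination _ _ _ hw,
      Finset.univ.affineCombination_eq_linear_combination _ _ hw]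
    rfl
  rw [h1, h2]
  exact Finset.sum_congr rfl fun i _ => by rw [hfg i]

/-- There is a measure-preserving affine map permuting the vertices cyclically. -/
lemma exists_cyclic (b : AffineBasis (Fin 3) ℝ E2) :
    ∃ σ : E2 →ᵃ[ℝ] E2, (∀ i, σ (b i) = b (i + 1)) ∧
      MeasurePreserving σ volume volume ∧ MeasurableEmbedding σ := by
  classical
  set e := b.basisOf 0 with he
  set g : { j : Fin 3 // j ≠ 0 } → E2 := fun j => b ((j : Fin 3) + 1) -ᵥ b 1 with hg
  set L : E2 →ₗ[ℝ] E2 := e.constr ℝ g with hL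
  have hLe : ∀ j : Fin 3, L (b j -ᵥ b 0) = b (j + 1) -ᵥ b 1 := by
    intro j
    by_cases hj : j = 0
    · subst hj; simp
    · have hbe : b j -ᵥ b 0 = e ⟨j, hj⟩ := by rw [he, b.basisOf_apply]
      rw [hbe, hL, Module.Basis.constr_basis]
  have hL2 : ∀ j k : Fin 3, L (b j -ᵥ b k) = b (j + 1) -ᵥ b (k + 1) := by
    intro j k
    have hd : (b j -ᵥ b k : E2) = (b j -ᵥ b 0) - (b k -ᵥ b 0) := by
      rw [vsub_sub_vsub_cancel_right]
    rw [hd, map_sub, hLe, hLe, vsub_sub_vsub_cancel_right]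
  have hfin3 : ∀ j : Fin 3, j + 1 + 1 + 1 = j := by decide
  have hL3 : L.comp (L.comp L) = LinearMap.id := by
    apply e.ext
    intro j
    have hej : e j = b ↑j -ᵥ b 0 := b.basisOf_apply 0 j
    simp only [LinearMap.comp_apply, LinearMap.id_apply, hej, hL2, hfin3]
  have hdet : LinearMap.det L = 1 := by
    have h3 : LinearMap.det L * (LinearMap.det L * LinearMap.det L) = 1 := by
      have := congrArg LinearMap.det hL3
      rwa [LinearMap.det_comp, LinearMap.det_comp, LinearMap.det_id] at this
    set d := LinearMap.det L with hd
    have hpos : 0 < d ^ 2 + d + 1 := by nlinarith [sq_nonneg (2 * d + 1)]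
    have hfac : (d - 1) * (d ^ 2 + d + 1) = 0 := by nlinarith
    rcases mul_eq_zero.1 hfac with h' | h'
    · linarith
    · linarith
  have hdet' : LinearMap.det L ≠ 0 := by rw [hdet]; norm_num
  refine ⟨AffineMap.mk' (fun x => L (x -ᵥ b 0) +ᵥ b 1) L (b 0)
    (fun p => by simp), ?_, ?_, ?_⟩
  · intro i
    simp only [AffineMap.coe_mk']
    rw [hLe, vsub_vadd]
  · have hmap : Measure.map L volume = volume := by
      rw [Measure.map_linearMap_addHaar_eq_smul_addHaar volume hdet', hdet]
      simp
    have hLmp : MeasurePreserving L volume volume :=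
      ⟨L.continuous_of_finiteDimensional.measurable, hmap⟩
    have comp := (measurePreserving_add_right volume (b 1)).comp
      (hLmp.comp (measurePreserving_add_right volume (-(b 0))))
    have heq : ((· + b 1) ∘ ⇑L ∘ (· + -(b 0))) =
        ⇑(AffineMap.mk' (fun x => L (x -ᵥ b 0) +ᵥ b 1) L (b 0) (fun p => by simp)) := by
      funext x
      simp [sub_eq_add_neg]
    exact heq ▸ comp
  · have hLc : (L.comp L).comp L = LinearMap.id := by
      rw [LinearMap.comp_assoc]; exact hL3
    set Le : E2 ≃ₗ[ℝ] E2 := LinearEquiv.ofLinear L (L.comp L) hL3 hLc with hLe'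
    have hme := ((Homeomorph.addRight (-(b 0))).trans
        (Le.toContinuousLinearEquiv.toHomeomorph.trans
          (Homeomorph.addRight (b 1)))).measurableEmbedding
    have heq : ⇑(AffineMap.mk' (fun x => L (x -ᵥ b 0) +ᵥ b 1) L (b 0) (fun p => by simp)) =
        ⇑((Homeomorph.addRight (-(b 0))).trans
          (Le.toContinuousLinearEquiv.toHomeomorph.trans (Homeomorph.addRight (b 1)))) := by
      funext x
      simp [Homeomorph.trans_apply, hLe', sub_eq_add_neg]
    rw [heq]
    exact hme

end TriUpperAux

open TriUpperAux

theorem integral_sq_affine_over_triangle_upper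
    (p₁ p₂ p₃ : EuclideanSpace ℝ (Fin 2))
    (h : AffineIndependent ℝ ![p₁, p₂, p₃])
    (v : EuclideanSpace ℝ (Fin 2) →ᵃ[ℝ] ℝ) :
    ∫ x in convexHull ℝ ({p₁, p₂, p₃} : Set (EuclideanSpace ℝ (Fin 2))), (v x) ^ 2 ≤
      (volume (convexHull ℝ ({p₁, p₂, p₃} : Set (EuclideanSpace ℝ (Fin 2))))).toReal / 3 *
        (v p₁ ^ 2 + v p₂ ^ 2 + v p₃ ^ 2) := by
  classical
  have hfr : Fintype.card (Fin 3) = Module.finrank ℝ (EuclideanSpace ℝ (Fin 2)) + 1 := by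
    simp
  have htop := h.affineSpan_eq_top_iff_card_eq_finrank_add_one.mpr hfr
  let b : AffineBasis (Fin 3) ℝ (EuclideanSpace ℝ (Fin 2)) := ⟨![p₁, p₂, p₃], h, htop⟩
  have hb0 : b 0 = p₁ := rfl
  have hb1 : b 1 = p₂ := rfl
  have hb2 : b 2 = p₃ := rfl
  have hrange : Set.range ⇑b = ({p₁, p₂, p₃} : Set (EuclideanSpace ℝ (Fin 2))) := by
    show Set.range ![p₁, p₂, p₃] = _
    ext x
    simp [Matrix.range_cons, Matrix.range_empty]
    tauto
  set T := convexHull ℝ ({p₁, p₂, p₃} : Set (EuclideanSpace ℝ (Fin 2))) with hT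
  have hTc : IsCompact T := (Set.toFinite _).isCompact_convexHull ℝ
  have hTm : MeasurableSet T := hTc.isClosed.measurableSet
  have hcont : ∀ i, Continuous fun x => b.coord i x := fun i =>
    (b.coord i).continuous_of_finiteDimensional
  have hint : ∀ i, IntegrableOn (fun x => b.coord i x) T volume := fun i =>
    (hcont i).continuousOn.integrableOn_compact hTc
  obtain ⟨σ, hσb, hσmp, hσemb⟩ := exists_cyclic b
  have himg : σ '' T = T := by
    rw [hT, ← hrange, AffineMap.image_convexHull]
    congr 1
    rw [← Set.range_comp]
    have h1 : (⇑σ ∘ ⇑b) = (⇑b ∘ fun i => i + 1) := funext fun i => hσb i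
    rw [h1]
    exact Function.Surjective.range_comp (fun j => ⟨j - 1, by simp⟩) ⇑b
  have hcoordσ : ∀ i, (b.coord (i + 1)).comp σ = b.coord i := by
    intro i
    apply affineMap_ext b
    intro j
    rw [AffineMap.comp_apply, hσb j, b.coord_apply, b.coord_apply]
    simp
  set I : Fin 3 → ℝ := fun i => ∫ x in T, b.coord i x with hI
  have hIstep : ∀ i, I (i + 1) = I i := by
    intro i
    have him := hσmp.setIntegral_image_emb hσemb (fun y => b.coord (i + 1) y) T
    rw [himg] at him
    have hfun : (fun x => b.coord (i + 1) (σ x)) = fun x => b.coord i x :=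
      funext fun x => by rw [← hcoordσ i]; rfl
    rw [hI]
    simp only
    rw [him, hfun]
  have hsum1 : ∀ x : EuclideanSpace ℝ (Fin 2), (∑ i, b.coord i x) = 1 :=
    b.sum_coord_apply_eq_one
  have hsum : I 0 + I 1 + I 2 = (volume T).toReal := by
    have h1 : ∫ x in T, (∑ i, b.coord i x) = ∑ i, I i :=
      integral_finset_sum _ fun i _ => hint i
    have h2 : ∫ x in T, (∑ i, b.coord i x) = (volume T).toReal := by
      rw [show (fun x => ∑ i, b.coord i x) = fun _ => (1 : ℝ) from funext fun x => hsum1 x]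
      simp [setIntegral_const, measureReal_def]
    rw [← Fin.sum_univ_three I, ← h1, h2]
  have hIval : ∀ i, I i = (volume T).toReal / 3 := by
    have e1 : I 1 = I 0 := hIstep 0
    have e2 : I 2 = I 1 := hIstep 1
    intro i
    fin_cases i
    · show I 0 = _; linarith
    · show I 1 = _; linarith
    · show I 2 = _; linarith
  have hpt : ∀ x ∈ T, (v x) ^ 2 ≤ ∑ i, b.coord i x * (v (b i)) ^ 2 := by
    intro x hx
    have hw0 : ∀ i, 0 ≤ b.coord i x := by
      have hx' : x ∈ convexHull ℝ (Set.range ⇑b) := by rwa [hrange]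
      rw [b.convexHull_eq_nonneg_coord] at hx'
      exact hx'
    have hw : ∑ i, b.coord i x = 1 := hsum1 x
    have hvx : v x = ∑ i, b.coord i x • v (b i) := by
      conv_lhs => rw [← b.affineCombination_coord_eq_self x]
      rw [Finset.map_affineCombination _ _ _ hw,
        Finset.univ.affineCombination_eq_linear_combination _ _ hw]
      rfl
    rw [hvx]
    have hJ := (Even.convexOn_pow (even_two)).map_sum_le
      (t := Finset.univ) (w := fun i => b.coord i x) (p := fun i => v (b i))
      (fun i _ => hw0 i) hw (fun i _ => Set.mem_univ _)
    simpa [smul_eq_mul] using hJ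
  have hvcont : Continuous fun x : EuclideanSpace ℝ (Fin 2) => (v x) ^ 2 :=
    (v.continuous_of_finiteDimensional).pow 2
  have hintv : IntegrableOn (fun x => (v x) ^ 2) T volume :=
    hvcont.continuousOn.integrableOn_compact hTc
  have hintg : IntegrableOn (fun x => ∑ i, b.coord i x * (v (b i)) ^ 2) T volume :=
    MeasureTheory.integrable_finset_sum _ fun i _ => (hint i).mul_const _
  calc ∫ x in T, (v x) ^ 2
      ≤ ∫ x in T, ∑ i, b.coord i x * (v (b i)) ^ 2 :=
        setIntegral_mono_on hintv hintg hTm hpt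
    _ = ∑ i, ∫ x in T, b.coord i x * (v (b i)) ^ 2 :=
        integral_finset_sum _ fun i _ => (hint i).mul_const _
    _ = ∑ i, I i * (v (b i)) ^ 2 := by
        refine Finset.sum_congr rfl fun i _ => ?_
        rw [hI]
        simp only
        rw [integral_mul_const]
    _ = (volume T).toReal / 3 * (v p₁ ^ 2 + v p₂ ^ 2 + v p₃ ^ 2) := by
        rw [Fin.sum_univ_three, hIval 0, hIval 1, hIval 2, hb0, hb1, hb2]
        ring
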